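/- Let ν̂^{a,d} ∈ ℝ^n denote, for each pair (a,d) with 1 ≤ a < d ≤ n+1, a fixed vector supported on coordinates a,...,d−1, and for π ∈ S_n let ν̂^{a,d}_π denote the vector obtained by permuting the nonzero entries of ν̂^{a,d} within its support according to the order ranking of π on coordinates a,...,d−1. Then the Minkowski sum ⊎_{a,d} Π̂(ν^{a,d}) of the embedded permutahedra equals the convex hull of the points μ_π = ∑_{a,d} ν̂^{a,d}_π over all π ∈ S_n. -/

import Mathlib

/-- Embed a vector `w : Fin p → ℝ` into `ℝ^n` on the window of coordinates
`a, ..., a + p - 1`, padding with zeros elsewhere. -/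
def embed (n a p : ℕ) (_h : a + p ≤ n) (w : Fin p → ℝ) : Fin n → ℝ :=
  fun t => if ht : a ≤ (t : ℕ) ∧ (t : ℕ) < a + p then w ⟨(t : ℕ) - a, by omega⟩ else 0

/-- The embedded permutahedron: the convex hull of the embeddings of all
coordinate permutations of `v` into the window `a, ..., a + p - 1`. -/
def embPermutahedron (n a p : ℕ) (h : a + p ≤ n) (v : Fin p → ℝ) :
    Set (Fin n → ℝ) :=
  convexHull ℝ {e | ∃ σ : Equiv.Perm (Fin p), e = embed n a p h (v ∘ σ)}

/-- The order ranking of `π ∈ S_n` on the window `a, ..., a + p - 1`: the rank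
(number of strictly smaller values) of `π (a + i)` among the `π (a + j)`. -/
def orderRank (n : ℕ) (π : Equiv.Perm (Fin n)) (a p : ℕ) (h : a + p ≤ n)
    (i : Fin p) : Fin p := by
  refine ⟨(Finset.univ.filter (fun j : Fin p =>
      π ⟨a + (j : ℕ), by omega⟩ < π ⟨a + (i : ℕ), by omega⟩)).card, ?_⟩
  refine lt_of_lt_of_le
    (Finset.card_lt_card (Finset.filter_ssubset.mpr
      ⟨i, Finset.mem_univ i, lt_irrefl _⟩)) ?_
  simp

/-- The vector `ν̂_π`: the embedding of `ν` permuted within its window according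
to the order ranking of `π` on that window. -/
def embRank (n : ℕ) (π : Equiv.Perm (Fin n)) (a p : ℕ) (h : a + p ≤ n)
    (ν : Fin p → ℝ) : Fin n → ℝ :=
  embed n a p h (fun i => ν (orderRank n π a p h i))

open Finset Pointwise

section AuxRank

/-- The rank (number of strictly smaller values) of `F i` among the values of `F`. -/
def rankOf {p n : ℕ} (F : Fin p → Fin n) (i : Fin p) : ℕ :=
  (Finset.univ.filter fun j => F j < F i).card

lemma rankOf_lt_of_lt {p n : ℕ} {F : Fin p → Fin n} {i j : Fin p}
    (hij : F i < F j) : rankOf F i < rankOf F j := by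
  apply Finset.card_lt_card
  have hsub : (Finset.univ.filter fun k => F k < F i) ⊆
      (Finset.univ.filter fun k => F k < F j) := by
    intro k hk
    simp only [Finset.mem_filter, Finset.mem_univ, true_and] at hk ⊢
    exact hk.trans hij
  rw [Finset.ssubset_iff_of_subset hsub]
  exact ⟨i, by simp [hij], by simp⟩

lemma rankOf_lt_iff {p n : ℕ} {F : Fin p → Fin n} (hF : Function.Injective F)
    (i j : Fin p) : rankOf F i < rankOf F j ↔ F i < F j := by
  constructor
  · intro hr
    rcases lt_trichotomy (F i) (F j) with hlt | heq | hgt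
    · exact hlt
    · exact absurd (congrArg (rankOf F) (hF heq)) (Nat.ne_of_lt hr)
    · exact absurd (rankOf_lt_of_lt hgt) (Nat.lt_asymm hr)
  · exact rankOf_lt_of_lt

lemma rankOf_injective {p n : ℕ} {F : Fin p → Fin n} (hF : Function.Injective F) :
    Function.Injective (rankOf F) := by
  intro i j hij
  by_contra hne
  rcases lt_or_gt_of_ne (fun hFij => hne (hF hFij) : F i ≠ F j) with hlt | hgt
  · exact (Nat.ne_of_lt (rankOf_lt_of_lt hlt)) hij
  · exact (Nat.ne_of_lt (rankOf_lt_of_lt hgt)) hij.symm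

lemma orderRank_val (n : ℕ) (π : Equiv.Perm (Fin n)) (a p : ℕ) (h : a + p ≤ n)
    (i : Fin p) :
    (orderRank n π a p h i : ℕ) =
      rankOf (fun j : Fin p => π ⟨a + (j : ℕ), by omega⟩) i := rfl

lemma window_injective (n : ℕ) (π : Equiv.Perm (Fin n)) (a p : ℕ) (h : a + p ≤ n) :
    Function.Injective (fun j : Fin p => π ⟨a + (j : ℕ), by omega⟩) := by
  intro s t hst
  have h1 : (⟨a + (s : ℕ), by omega⟩ : Fin n) = ⟨a + (t : ℕ), by omega⟩ :=
    π.injective hst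
  have h2 : a + (s : ℕ) = a + (t : ℕ) := congrArg Fin.val h1
  exact Fin.ext (by omega)

lemma orderRank_bijective (n : ℕ) (π : Equiv.Perm (Fin n)) (a p : ℕ)
    (h : a + p ≤ n) : Function.Bijective (orderRank n π a p h) := by
  rw [← Finite.injective_iff_bijective]
  intro i j hij
  exact rankOf_injective (window_injective n π a p h) (congrArg Fin.val hij)

end AuxRank

section AuxEmbed

lemma embed_eq_sum (n a p : ℕ) (h : a + p ≤ n) (w : Fin p → ℝ) :
    embed n a p h w =
      ∑ i : Fin p, w i • (Pi.single (⟨a + (i : ℕ), by omega⟩ : Fin n) (1 : ℝ) : Fin n → ℝ) := by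
  funext t
  rw [Finset.sum_apply]
  by_cases ht : a ≤ (t : ℕ) ∧ (t : ℕ) < a + p
  · rw [embed, dif_pos ht]
    rw [Finset.sum_eq_single (⟨(t : ℕ) - a, by omega⟩ : Fin p)]
    · rw [Pi.smul_apply, smul_eq_mul, Pi.single_apply,
        if_pos (Fin.ext (show (t : ℕ) = a + ((t : ℕ) - a) by omega)), mul_one]
    · intro i _ hi
      rw [Pi.smul_apply, smul_eq_mul, Pi.single_apply, if_neg, mul_zero]
      intro hti
      apply hi
      have : (t : ℕ) = a + (i : ℕ) := congrArg Fin.val hti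
      exact Fin.ext (show (i : ℕ) = (t : ℕ) - a by omega)
    · intro hmem
      exact absurd (Finset.mem_univ _) hmem
  · rw [embed, dif_neg ht]
    symm
    apply Finset.sum_eq_zero
    intro i _
    rw [Pi.smul_apply, smul_eq_mul, Pi.single_apply, if_neg, mul_zero]
    intro hti
    have : (t : ℕ) = a + (i : ℕ) := congrArg Fin.val hti
    exact ht ⟨by omega, by omega⟩

lemma clm_embed (n a p : ℕ) (h : a + p ≤ n) (w : Fin p → ℝ)
    (f : (Fin n → ℝ) →L[ℝ] ℝ) :
    f (embed n a p h w) =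
      ∑ i : Fin p, w i * f (Pi.single (⟨a + (i : ℕ), by omega⟩ : Fin n) (1 : ℝ)) := by
  rw [embed_eq_sum, map_sum]
  refine Finset.sum_congr rfl fun i _ => ?_
  rw [map_smul, smul_eq_mul]

end AuxEmbed

section AuxSort

lemma exists_sorting_perm (n : ℕ) (c : Fin n → ℝ) :
    ∃ π : Equiv.Perm (Fin n), ∀ s t : Fin n,
      π s < π t ↔ toLex (-c s, (s : ℕ)) < toLex (-c t, (t : ℕ)) := by
  set key : Fin n → Lex (ℝ × ℕ) := fun s => toLex (-c s, (s : ℕ)) with hkey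
  have hinj : Function.Injective key := by
    intro s t hst
    have h1 : (-c s, (s : ℕ)) = (-c t, (t : ℕ)) := toLex.injective hst
    exact Fin.ext (congrArg Prod.snd h1)
  set τ : Equiv.Perm (Fin n) := Tuple.sort key with hτ
  have hsm : StrictMono (key ∘ τ) :=
    (Tuple.monotone_sort key).strictMono_of_injective (hinj.comp τ.injective)
  refine ⟨τ⁻¹, fun s t => ?_⟩
  have h1 : key (τ (τ⁻¹ s)) < key (τ (τ⁻¹ t)) ↔ τ⁻¹ s < τ⁻¹ t := hsm.lt_iff_lt
  simp only [← Equiv.Perm.mul_apply, mul_inv_cancel, Equiv.Perm.one_apply] at h1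
  exact h1.symm

end AuxSort

section AuxKey

lemma key_step (n : ℕ) (c : Fin n → ℝ) (π : Equiv.Perm (Fin n))
    (hπ : ∀ s t : Fin n, π s < π t ↔ toLex (-c s, (s : ℕ)) < toLex (-c t, (t : ℕ)))
    (a p : ℕ) (h : a + p ≤ n) (ν : Fin p → ℝ) (hν : Antitone ν)
    (σ : Equiv.Perm (Fin p)) :
    ∑ j : Fin p, ν (σ j) * c ⟨a + (j : ℕ), by omega⟩ ≤
      ∑ j : Fin p, ν (orderRank n π a p h j) * c ⟨a + (j : ℕ), by omega⟩ := by
  classical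
  set C : Fin p → ℝ := fun j => c ⟨a + (j : ℕ), by omega⟩ with hC
  set F : Fin p → Fin n := fun j => π ⟨a + (j : ℕ), by omega⟩ with hF
  have hFinj : Function.Injective F := window_injective n π a p h
  set R : Equiv.Perm (Fin p) :=
    Equiv.ofBijective _ (orderRank_bijective n π a p h) with hR
  have hRapp : ∀ j, R j = orderRank n π a p h j := fun j => rfl
  have hmono : Monovary C (ν ∘ ⇑R) := by
    intro i j hij
    -- hij : ν (R i) < ν (R j), goal : C i ≤ C j
    have hRlt : R j < R i := by
      rcases lt_trichotomy (R i) (R j) with hlt | heq | hgt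
      · exact absurd (hν hlt.le) (not_le.mpr hij)
      · exact absurd hij (by rw [show (ν ∘ ⇑R) i = (ν ∘ ⇑R) j from congrArg ν heq]
                             exact lt_irrefl _)
      · exact hgt
    have hrank : rankOf F j < rankOf F i := by
      have e1 : (R j : ℕ) = rankOf F j := rfl
      have e2 : (R i : ℕ) = rankOf F i := rfl
      rw [← e1, ← e2]
      exact hRlt
    have hFlt : F j < F i := (rankOf_lt_iff hFinj j i).mp hrank
    have hkey := (hπ _ _).mp hFlt
    rw [Prod.Lex.lt_iff] at hkey
    have : -c ⟨a + (j : ℕ), by omega⟩ ≤ -c ⟨a + (i : ℕ), by omega⟩ := by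
      rcases hkey with hlt | ⟨heq, _⟩
      · exact le_of_lt hlt
      · exact le_of_eq heq
    have : C i ≤ C j := by
      simp only [hC]
      linarith
    exact this
  have key := hmono.sum_mul_comp_perm_le_sum_mul (σ := σ.trans R.symm)
  have e1 : ∑ j : Fin p, ν (σ j) * c ⟨a + (j : ℕ), by omega⟩
      = ∑ j : Fin p, C j * (ν ∘ ⇑R) ((σ.trans R.symm) j) := by
    refine Finset.sum_congr rfl fun j _ => ?_
    have : (ν ∘ ⇑R) ((σ.trans R.symm) j) = ν (σ j) := by
      simp [Equiv.trans_apply, Equiv.apply_symm_apply]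
    rw [this, mul_comm]
  have e2 : ∑ j : Fin p, C j * (ν ∘ ⇑R) j
      = ∑ j : Fin p, ν (orderRank n π a p h j) * c ⟨a + (j : ℕ), by omega⟩ := by
    refine Finset.sum_congr rfl fun j _ => ?_
    rw [mul_comm]
    rfl
  rw [e1, ← e2]
  exact key

end AuxKey

/-- The Minkowski sum of the embedded permutahedra `Π̂(ν^{a,d})` equals the
convex hull of the points `μ_π = ∑_{a,d} ν̂^{a,d}_π` over all `π ∈ S_n`. -/
theorem minkowski_sum_embedded_permutahedra (n : ℕ) (ι : Type*) [Fintype ι]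
    (a p : ι → ℕ) (hp : ∀ i, 0 < p i) (h : ∀ i, a i + p i ≤ n)
    (ν : ∀ i, Fin (p i) → ℝ) (hν : ∀ i, Antitone (ν i)) :
    {x : Fin n → ℝ | ∃ u : ι → Fin n → ℝ,
        (∀ i, u i ∈ embPermutahedron n (a i) (p i) (h i) (ν i)) ∧ x = ∑ i, u i}
      = convexHull ℝ {μ | ∃ π : Equiv.Perm (Fin n),
          μ = ∑ i, embRank n π (a i) (p i) (h i) (ν i)} := by
  classical
  set S : ι → Set (Fin n → ℝ) := fun i =>
    {e | ∃ σ : Equiv.Perm (Fin (p i)), e = embed n (a i) (p i) (h i) (ν i ∘ σ)}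
    with hS
  set M : Set (Fin n → ℝ) :=
    {μ | ∃ π : Equiv.Perm (Fin n),
      μ = ∑ i, embRank n π (a i) (p i) (h i) (ν i)} with hM
  have hLHS : {x : Fin n → ℝ | ∃ u : ι → Fin n → ℝ,
        (∀ i, u i ∈ embPermutahedron n (a i) (p i) (h i) (ν i)) ∧ x = ∑ i, u i}
      = ∑ i : ι, embPermutahedron n (a i) (p i) (h i) (ν i) := by
    ext x
    rw [Set.mem_fintype_sum]
    constructor
    · rintro ⟨u, hu, rfl⟩
      exact ⟨u, hu, rfl⟩
    · rintro ⟨g, hg, rfl⟩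
      exact ⟨g, hg, rfl⟩
  rw [hLHS]
  have hCH : ∑ i : ι, embPermutahedron n (a i) (p i) (h i) (ν i)
      = convexHull ℝ (∑ i : ι, S i) := by
    rw [convexHull_sum]
    rfl
  rw [hCH]
  have hMfin : M.Finite := by
    have hMr : M = Set.range
        (fun π : Equiv.Perm (Fin n) =>
          ∑ i, embRank n π (a i) (p i) (h i) (ν i)) := by
      ext μ
      simp only [hM, Set.mem_setOf_eq, Set.mem_range, eq_comm]
    rw [hMr]
    exact Set.finite_range _
  have hMsub : M ⊆ ∑ i : ι, S i := by
    rintro μ ⟨π, rfl⟩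
    rw [Set.mem_fintype_sum]
    refine ⟨fun i => embRank n π (a i) (p i) (h i) (ν i), fun i => ?_, rfl⟩
    exact ⟨Equiv.ofBijective _ (orderRank_bijective n π (a i) (p i) (h i)), rfl⟩
  have h1 : (∑ i : ι, S i) ⊆ convexHull ℝ M := by
    intro x hx
    rw [Set.mem_fintype_sum] at hx
    obtain ⟨g, hg, hsum⟩ := hx
    have hg' : ∀ i, ∃ σ : Equiv.Perm (Fin (p i)),
        g i = embed n (a i) (p i) (h i) (ν i ∘ σ) := hg
    choose σ hσ using hg'
    by_contra hxM
    obtain ⟨f, u, hfu, hux⟩ := geometric_hahn_banach_closed_point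
      (convex_convexHull ℝ M) (hMfin.isClosed_convexHull (𝕜 := ℝ)) hxM
    set c : Fin n → ℝ := fun t => f (Pi.single t (1 : ℝ)) with hc
    obtain ⟨π, hπ⟩ := exists_sorting_perm n c
    set μ := ∑ i, embRank n π (a i) (p i) (h i) (ν i) with hμ
    have hμM : μ ∈ convexHull ℝ M := subset_convexHull ℝ M ⟨π, rfl⟩
    have hle : f x ≤ f μ := by
      rw [← hsum, map_sum, hμ, map_sum]
      refine Finset.sum_le_sum fun i _ => ?_
      rw [hσ i, embRank, clm_embed, clm_embed]
      exact key_step n c π hπ (a i) (p i) (h i) (ν i) (hν i) (σ i)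
    linarith [hfu μ hμM]
  apply Set.Subset.antisymm
  · exact convexHull_min h1 (convex_convexHull ℝ M)
  · exact convexHull_mono hMsub
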